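/- If X and Y are real normed spaces, f : X → Y is uniformly continuous, and g : X → ℝ is defined by g(x) = ‖f(x)‖/(1 + ‖x‖), then g is bounded on X. -/

import Mathlib

lemma key_stmt5 {X Y : Type*} [NormedAddCommGroup X] [NormedSpace ℝ X]
    [NormedAddCommGroup Y] (f : X → Y) (δ : ℝ) (hδ : 0 < δ)
    (h : ∀ u v : X, dist u v < δ → dist (f u) (f v) < 1) :
    ∀ n : ℕ, ∀ x : X, ‖x‖ ≤ n * (δ / 2) → dist (f x) (f 0) ≤ n := by
  intro n
  induction n with
  | zero =>
    intro x hx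
    simp only [Nat.cast_zero, zero_mul] at hx
    have : x = 0 := by
      have := norm_nonneg x
      have hx0 : ‖x‖ = 0 := le_antisymm hx this
      exact norm_eq_zero.mp hx0
    simp [this]
  | succ n ih =>
    intro x hx
    by_cases hsmall : ‖x‖ < δ
    · have : dist (f x) (f 0) < 1 := h x 0 (by simpa using hsmall)
      have h1 : (1 : ℝ) ≤ (n : ℝ) + 1 := by have := Nat.cast_nonneg (α := ℝ) n; linarith
      push_cast
      linarith
    · push_neg at hsmall
      have hx0 : 0 < ‖x‖ := lt_of_lt_of_le hδ hsmall
      set t : ℝ := 1 - (δ / 2) / ‖x‖ with ht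
      have htle : (δ / 2) / ‖x‖ ≤ 1 := by
        rw [div_le_one hx0]; linarith
      have ht0 : 0 ≤ t := by rw [ht]; linarith
      have hnormy : ‖t • x‖ = ‖x‖ - δ / 2 := by
        rw [norm_smul, Real.norm_eq_abs, abs_of_nonneg ht0, ht, sub_mul, one_mul,
          div_mul_cancel₀ _ (ne_of_gt hx0)]
      have hdxy : dist x (t • x) < δ := by
        rw [dist_eq_norm]
        have : x - t • x = ((δ / 2) / ‖x‖) • x := by
          rw [ht]; module
        rw [this, norm_smul, Real.norm_eq_abs, abs_of_nonneg (by positivity),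
          div_mul_cancel₀ _ (ne_of_gt hx0)]
        linarith
      have hy : ‖t • x‖ ≤ n * (δ / 2) := by
        rw [hnormy]; push_cast at hx ⊢; linarith
      have h1 := h x (t • x) hdxy
      have h2 := ih (t • x) hy
      have := dist_triangle (f x) (f (t • x)) (f 0)
      push_cast
      linarith

theorem stmt5 {X Y : Type*} [NormedAddCommGroup X] [NormedSpace ℝ X]
    [NormedAddCommGroup Y] [NormedSpace ℝ Y] (f : X → Y)
    (hf : UniformContinuous f) (g : X → ℝ) (hg : ∀ x, g x = ‖f x‖ / (1 + ‖x‖)) :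
    ∃ C : ℝ, ∀ x : X, g x ≤ C := by
  obtain ⟨δ, hδ, hδ'⟩ := Metric.uniformContinuous_iff.mp hf 1 one_pos
  have h : ∀ u v : X, dist u v < δ → dist (f u) (f v) < 1 := fun u v huv => hδ' huv
  set A : ℝ := ‖f 0‖ + 1 with hA
  set B : ℝ := 2 / δ with hB
  refine ⟨max A B, fun x => ?_⟩
  -- bound ‖f x‖ ≤ A + B * ‖x‖
  set n : ℕ := ⌈‖x‖ / (δ / 2)⌉₊ with hn
  have hδ2 : 0 < δ / 2 := by linarith
  have hxn : ‖x‖ ≤ n * (δ / 2) := by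
    rw [hn]
    calc ‖x‖ = ‖x‖ / (δ / 2) * (δ / 2) := by field_simp
    _ ≤ ⌈‖x‖ / (δ / 2)⌉₊ * (δ / 2) := by
        apply mul_le_mul_of_nonneg_right (Nat.le_ceil _) (le_of_lt hδ2)
  have hdist := key_stmt5 f δ hδ h n x hxn
  have hnle : (n : ℝ) ≤ ‖x‖ / (δ / 2) + 1 := by
    rw [hn]
    exact le_of_lt (Nat.ceil_lt_add_one (by positivity))
  have hfx : ‖f x‖ ≤ A + B * ‖x‖ := by
    have := norm_le_norm_add_norm_sub' (f x) (f 0)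
    have hd : ‖f x - f 0‖ = dist (f x) (f 0) := (dist_eq_norm _ _).symm
    have : ‖f x‖ ≤ ‖f 0‖ + (n : ℝ) := by
      rw [← hd] at hdist
      have := norm_sub_norm_le (f x) (f 0)
      linarith
    have hdiv : ‖x‖ / (δ / 2) = B * ‖x‖ := by
      rw [hB]; field_simp
    rw [hdiv] at hnle
    rw [hA]
    linarith
  rw [hg]
  rw [div_le_iff₀ (by positivity)]
  have hAle : A ≤ max A B := le_max_left _ _
  have hBle : B ≤ max A B := le_max_right _ _
  have hxnn : (0:ℝ) ≤ ‖x‖ := norm_nonneg x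
  calc ‖f x‖ ≤ A + B * ‖x‖ := hfx
  _ ≤ max A B + max A B * ‖x‖ := by nlinarith
  _ = max A B * (1 + ‖x‖) := by ring
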